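/- Let c_0,...,c_k, d_0,...,d_k ∈ (0,2π), C_j = e^{i c_j}, D_j = e^{i d_j}, p ∈ {0,1}. Assume (1/2)·Σ_{j=0}^k (c_j + d_j) ≡ pπ (mod 2π), Π_{j=0}^k sin(c_j/2) = Π_{j=0}^k sin(d_j/2), and that the denominators below are nonzero. Then C_0 = ((−1)^p + Π_{j=1}^k(1 − D_j^{-1}) / Π_{j=1}^k(C_j − 1)) / ((−1)^p + Π_{j=1}^k(D_j − 1) / Π_{j=1}^k(1 − C_j^{-1})). -/

import Mathlib

open Real Finset

theorem aux1 (x : ℝ) : Complex.exp (Complex.I * x) - 1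
    = Complex.exp (Complex.I * ((x:ℂ)/2)) * (2 * Complex.I * Real.sin (x/2)) := by
  have h : (Real.sin (x/2) : ℂ) = Complex.sin (x/2) := by push_cast; ring_nf
  rw [h, Complex.sin, show Complex.I * (x:ℂ) = Complex.I * ((x:ℂ)/2) + Complex.I * ((x:ℂ)/2) by ring,
    Complex.exp_add]
  rw [show -(((x:ℂ)/2)) * Complex.I = -(Complex.I * ((x:ℂ)/2)) by ring, Complex.exp_neg,
    show ((x:ℂ)/2) * Complex.I = Complex.I * ((x:ℂ)/2) by ring]
  field_simp [Complex.exp_ne_zero]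
  linear_combination (Complex.exp (Complex.I * x / 2)^2 - 1) * Complex.I_mul_I

theorem aux2 (x : ℝ) : 1 - (Complex.exp (Complex.I * x))⁻¹
    = Complex.exp (-(Complex.I * ((x:ℂ)/2))) * (2 * Complex.I * Real.sin (x/2)) := by
  have h : (Real.sin (x/2) : ℂ) = Complex.sin (x/2) := by push_cast; ring_nf
  rw [h, Complex.sin, ← Complex.exp_neg,
    show -(Complex.I * (x:ℂ)) = -(Complex.I * ((x:ℂ)/2)) + -(Complex.I * ((x:ℂ)/2)) by ring,
    Complex.exp_add]
  rw [show -(((x:ℂ)/2)) * Complex.I = -(Complex.I * ((x:ℂ)/2)) by ring,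
    show ((x:ℂ)/2) * Complex.I = Complex.I * ((x:ℂ)/2) by ring, Complex.exp_neg]
  field_simp [Complex.exp_ne_zero]
  linear_combination (Complex.exp (Complex.I * x / 2)^2 - 1) * Complex.I_mul_I

theorem auxne (x : ℝ) (hx : x ∈ Set.Ioo 0 (2*π)) : Complex.exp (Complex.I * x) ≠ 1 := by
  intro h
  rw [Complex.exp_eq_one_iff] at h
  obtain ⟨n, hn⟩ := h
  have hx' : x = n * (2*π) := by
    have h2 : (x : ℂ) = n * (2*π) := by
      have := mul_right_cancel₀ Complex.I_ne_zero (by linear_combination hn :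
        (x:ℂ) * Complex.I = (n * (2*π) : ℂ) * Complex.I)
      exact this
    exact_mod_cast h2
  obtain ⟨h1, h2⟩ := hx
  have hπ := Real.pi_pos
  rcases lt_trichotomy n 1 with h | h | h
  · have : (n:ℝ) ≤ 0 := by exact_mod_cast Int.lt_add_one_iff.mp h
    nlinarith
  · rw [h] at hx'; push_cast at hx'; nlinarith
  · have : (2:ℝ) ≤ n := by exact_mod_cast h
    nlinarith

theorem stmt1 (k : ℕ) (c d : ℕ → ℝ) (p : ℕ)
    (hp : p = 0 ∨ p = 1)
    (hc : ∀ j ≤ k, c j ∈ Set.Ioo 0 (2*π)) (hd : ∀ j ≤ k, d j ∈ Set.Ioo 0 (2*π))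
    (hsum : ∃ m : ℤ, (1/2) * (∑ j ∈ Finset.range (k+1), (c j + d j)) = p * π + m * (2*π))
    (hprod : ∏ j ∈ Finset.range (k+1), Real.sin (c j / 2)
      = ∏ j ∈ Finset.range (k+1), Real.sin (d j / 2))
    (hC1 : ∏ j ∈ Finset.Icc 1 k, (Complex.exp (Complex.I * (c j)) - 1) ≠ 0)
    (hC2 : ∏ j ∈ Finset.Icc 1 k, (1 - (Complex.exp (Complex.I * (c j)))⁻¹) ≠ 0)
    (hden : (-1)^p + (∏ j ∈ Finset.Icc 1 k, (Complex.exp (Complex.I * (d j)) - 1))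
        / (∏ j ∈ Finset.Icc 1 k, (1 - (Complex.exp (Complex.I * (c j)))⁻¹)) ≠ 0) :
    Complex.exp (Complex.I * (c 0))
      = ((-1)^p + (∏ j ∈ Finset.Icc 1 k, (1 - (Complex.exp (Complex.I * (d j)))⁻¹))
            / (∏ j ∈ Finset.Icc 1 k, (Complex.exp (Complex.I * (c j)) - 1)))
        / ((-1)^p + (∏ j ∈ Finset.Icc 1 k, (Complex.exp (Complex.I * (d j)) - 1))
            / (∏ j ∈ Finset.Icc 1 k, (1 - (Complex.exp (Complex.I * (c j)))⁻¹))) := by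
  obtain ⟨m, hm⟩ := hsum
  set Sc : ℝ := ∑ j ∈ Finset.range (k+1), c j with hSc
  set Sd : ℝ := ∑ j ∈ Finset.range (k+1), d j with hSd
  -- E and its square
  set E : ℂ := (-1)^p with hEdef
  have hEE : E * E = 1 := by rcases hp with h | h <;> simp [hEdef, h]
  -- exponential of the angle sum
  have hE : Complex.exp (Complex.I * ((Sc:ℂ)/2)) * Complex.exp (Complex.I * ((Sd:ℂ)/2)) = E := by
    rw [← Complex.exp_add]
    have harg : Complex.I * ((Sc:ℂ)/2) + Complex.I * ((Sd:ℂ)/2)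
        = (p:ℂ) * (π * Complex.I) + (m:ℂ) * (2 * π * Complex.I) := by
      have : ((Sc + Sd)/2 : ℝ) = p * π + m * (2*π) := by
        rw [hSc, hSd, ← Finset.sum_add_distrib]; linarith [hm]
      have h2 : ((Sc:ℂ) + Sd)/2 = (p:ℂ) * π + (m:ℂ) * (2*π) := by exact_mod_cast this
      linear_combination Complex.I * h2
    rw [harg, Complex.exp_add, Complex.exp_int_mul_two_pi_mul_I, mul_one,
      Complex.exp_nat_mul, Complex.exp_pi_mul_I]
  -- product formulas over range (k+1)
  have PBc : ∏ j ∈ Finset.range (k+1), (Complex.exp (Complex.I * c j) - 1)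
      = Complex.exp (Complex.I * ((Sc:ℂ)/2)) * ∏ j ∈ Finset.range (k+1), (2*Complex.I*(Real.sin (c j/2):ℂ)) := by
    simp_rw [aux1]
    rw [Finset.prod_mul_distrib, ← Complex.exp_sum]
    congr 2
    rw [← Finset.mul_sum]
    congr 1
    rw [hSc]
    push_cast
    rw [Finset.sum_div]
  have PBd : ∏ j ∈ Finset.range (k+1), (Complex.exp (Complex.I * d j) - 1)
      = Complex.exp (Complex.I * ((Sd:ℂ)/2)) * ∏ j ∈ Finset.range (k+1), (2*Complex.I*(Real.sin (d j/2):ℂ)) := by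
    simp_rw [aux1]
    rw [Finset.prod_mul_distrib, ← Complex.exp_sum]
    congr 2
    rw [← Finset.mul_sum]
    congr 1
    rw [hSd]
    push_cast
    rw [Finset.sum_div]
  have PAc : ∏ j ∈ Finset.range (k+1), (1 - (Complex.exp (Complex.I * c j))⁻¹)
      = Complex.exp (-(Complex.I * ((Sc:ℂ)/2))) * ∏ j ∈ Finset.range (k+1), (2*Complex.I*(Real.sin (c j/2):ℂ)) := by
    simp_rw [aux2]
    rw [Finset.prod_mul_distrib, ← Complex.exp_sum]
    congr 2
    rw [Finset.sum_neg_distrib]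
    congr 1
    rw [← Finset.mul_sum]
    congr 1
    rw [hSc]
    push_cast
    rw [Finset.sum_div]
  have PAd : ∏ j ∈ Finset.range (k+1), (1 - (Complex.exp (Complex.I * d j))⁻¹)
      = Complex.exp (-(Complex.I * ((Sd:ℂ)/2))) * ∏ j ∈ Finset.range (k+1), (2*Complex.I*(Real.sin (d j/2):ℂ)) := by
    simp_rw [aux2]
    rw [Finset.prod_mul_distrib, ← Complex.exp_sum]
    congr 2
    rw [Finset.sum_neg_distrib]
    congr 1
    rw [← Finset.mul_sum]
    congr 1
    rw [hSd]
    push_cast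
    rw [Finset.sum_div]
  -- equal sine products
  have hT : ∏ j ∈ Finset.range (k+1), (2*Complex.I*(Real.sin (c j/2):ℂ))
      = ∏ j ∈ Finset.range (k+1), (2*Complex.I*(Real.sin (d j/2):ℂ)) := by
    rw [Finset.prod_mul_distrib, ← Complex.ofReal_prod, hprod, Complex.ofReal_prod,
      ← Finset.prod_mul_distrib]
  -- closure relations over the full index set
  have eqA : ∏ j ∈ Finset.range (k+1), (1 - (Complex.exp (Complex.I * c j))⁻¹)
      = E * ∏ j ∈ Finset.range (k+1), (Complex.exp (Complex.I * d j) - 1) := by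
    rw [PAc, PBd, hT]
    have : Complex.exp (-(Complex.I * ((Sc:ℂ)/2))) = E * Complex.exp (Complex.I * ((Sd:ℂ)/2)) := by
      rw [Complex.exp_neg]
      refine inv_eq_of_mul_eq_one_right ?_
      calc Complex.exp (Complex.I * ((Sc:ℂ)/2)) * (E * Complex.exp (Complex.I * ((Sd:ℂ)/2)))
          = (Complex.exp (Complex.I * ((Sc:ℂ)/2)) * Complex.exp (Complex.I * ((Sd:ℂ)/2))) * E := by ring
        _ = E * E := by rw [hE]
        _ = 1 := hEE
    rw [this]; ring
  have eqB : ∏ j ∈ Finset.range (k+1), (Complex.exp (Complex.I * c j) - 1)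
      = E * ∏ j ∈ Finset.range (k+1), (1 - (Complex.exp (Complex.I * d j))⁻¹) := by
    rw [PBc, PAd, hT]
    have : Complex.exp (Complex.I * ((Sc:ℂ)/2)) = E * Complex.exp (-(Complex.I * ((Sd:ℂ)/2))) := by
      rw [Complex.exp_neg, eq_mul_inv_iff_mul_eq₀ (Complex.exp_ne_zero _)]
      exact hE
    rw [this]; ring
  -- split off the 0 index
  have hsplit : Finset.range (k+1) = insert 0 (Finset.Icc 1 k) := by
    ext j; simp; omega
  have h0 : (0:ℕ) ∉ Finset.Icc 1 k := by simp
  rw [hsplit, Finset.prod_insert h0, Finset.prod_insert h0] at eqA eqB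
  set A : ℂ := Complex.exp (Complex.I * (c 0)) with hAdef
  set B : ℂ := Complex.exp (Complex.I * (d 0)) with hBdef
  set P1 : ℂ := ∏ j ∈ Finset.Icc 1 k, (1 - (Complex.exp (Complex.I * (c j)))⁻¹) with hP1def
  set P2 : ℂ := ∏ j ∈ Finset.Icc 1 k, (Complex.exp (Complex.I * (c j)) - 1) with hP2def
  set Q1 : ℂ := ∏ j ∈ Finset.Icc 1 k, (Complex.exp (Complex.I * (d j)) - 1) with hQ1def
  set Q2 : ℂ := ∏ j ∈ Finset.Icc 1 k, (1 - (Complex.exp (Complex.I * (d j)))⁻¹) with hQ2def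
  -- eqA : (1 - A⁻¹) * P1 = E * ((B - 1) * Q1)
  -- eqB : (A - 1) * P2 = E * ((1 - B⁻¹) * Q2)
  have hA0 : A ≠ 0 := Complex.exp_ne_zero _
  have hB0 : B ≠ 0 := Complex.exp_ne_zero _
  have hA1 : A ≠ 1 := auxne _ (hc 0 (Nat.zero_le _))
  have hB1 : B ≠ 1 := auxne _ (hd 0 (Nat.zero_le _))
  have hAinv : A * (1 - A⁻¹) = A - 1 := by field_simp
  have hBinv : B * (1 - B⁻¹) = B - 1 := by field_simp
  have e1 : (A - 1) * P1 = E * (A * ((B - 1) * Q1)) := by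
    linear_combination A * eqA - P1 * hAinv
  have e2 : (A - 1) * (P2 * B) = E * ((B - 1) * Q2) := by
    linear_combination B * eqB + E * Q2 * hBinv
  have main : (A - 1) * (A * ((E*P1 + Q1) * P2) - (E*P2 + Q2) * P1) = 0 := by
    linear_combination (E * ((A-1)*P2 - E*Q2)) * e1 + (E * E * A * Q1) * e2
      - ((A-1) * (A*Q1*P2 - Q2*P1)) * hEE
  have key : A * ((E*P1 + Q1) * P2) = (E*P2 + Q2) * P1 := by
    have := mul_eq_zero.mp main
    rcases this with h | h
    · exact absurd (by linear_combination h) hA1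
    · linear_combination h
  have hgoal : E + Q2/P2 = A * (E + Q1/P1) := by
    field_simp [hC1, hC2]
    linear_combination (-1 : ℂ) * key
  rw [hgoal, mul_div_assoc, div_self hden, mul_one]
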